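/- For every n ≥ 1, all dimensions d_A, d_B ≥ 1, every unit vector ψ ∈ ℂ^{d_A} ⊗ ℂ^{d_B} (realized as ℂ^{d_A·d_B} via the Kronecker product), and all families of Hermitian matrices A_s (s ∈ {0,1}^n, size d_A×d_A) and B_t (t ∈ {1,…,n}, size d_B×d_B) satisfying A_s² = I and B_t² = I, the quantum bias of the corresponding INDEX^n strategy satisfies (1/(n·2^n)) Σ_{s ∈ {0,1}^n} Σ_{t=1}^n (−1)^{s_t} · Re⟨ψ, (A_s ⊗ B_t) ψ⟩ ≤ 1/√n. -/

import Mathlib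

open Matrix BigOperators Finset Kronecker

/-- Every quantum strategy for the INDEX game of `n` bits — a shared unit
vector `ψ ∈ ℂ^{dA} ⊗ ℂ^{dB}` together with Hermitian `±1`-observables `A s` and `B t`
squaring to the identity — has bias at most `1/√n`. -/
theorem index_game_quantum_bias_le
    (n dA dB : ℕ) (hn : 1 ≤ n) (hdA : 1 ≤ dA) (hdB : 1 ≤ dB)
    (ψ : Fin dA × Fin dB → ℂ) (hψ : star ψ ⬝ᵥ ψ = 1)
    (A : (Fin n → ZMod 2) → Matrix (Fin dA) (Fin dA) ℂ)
    (B : Fin n → Matrix (Fin dB) (Fin dB) ℂ)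
    (hAherm : ∀ s, (A s).IsHermitian) (hAsq : ∀ s, A s * A s = 1)
    (hBherm : ∀ t, (B t).IsHermitian) (hBsq : ∀ t, B t * B t = 1) :
    (1 / (n * 2 ^ n) : ℝ) * ∑ s : Fin n → ZMod 2, ∑ t : Fin n,
      (if s t = 0 then (1 : ℝ) else -1) * (star ψ ⬝ᵥ ((A s ⊗ₖ B t) *ᵥ ψ)).re
      ≤ 1 / Real.sqrt n := by
  classical
  have hn0 : (0:ℝ) < n := by exact_mod_cast hn
  have kronH : ∀ (M : Matrix (Fin dA) (Fin dA) ℂ) (N : Matrix (Fin dB) (Fin dB) ℂ),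
      (M ⊗ₖ N)ᴴ = Mᴴ ⊗ₖ Nᴴ := by
    intro M N; ext ⟨i, j⟩ ⟨k, l⟩
    simp [Matrix.conjTranspose_apply, Matrix.kroneckerMap_apply]
  let toE : (Fin dA × Fin dB → ℂ) → EuclideanSpace ℂ (Fin dA × Fin dB) := fun x => WithLp.toLp 2 x
  have hinner : ∀ x y : Fin dA × Fin dB → ℂ,
      (inner (𝕜 := ℂ) (toE x) (toE y) : ℂ) = star x ⬝ᵥ y := by
    intro x y
    simp [toE, PiLp.inner_apply, dotProduct, RCLike.inner_apply, mul_comm]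
  have quad : ∀ (P Q : Matrix (Fin dA × Fin dB) (Fin dA × Fin dB) ℂ),
      (inner (𝕜 := ℂ) (toE (P *ᵥ ψ)) (toE (Q *ᵥ ψ)) : ℂ) = star ψ ⬝ᵥ ((Pᴴ * Q) *ᵥ ψ) := by
    intro P Q
    rw [hinner, Matrix.star_mulVec, ← Matrix.mulVec_mulVec, Matrix.dotProduct_mulVec,
      Matrix.dotProduct_mulVec, Matrix.dotProduct_mulVec]
  set ε : (Fin n → ZMod 2) → Fin n → ℝ := fun s t => if s t = 0 then 1 else -1 with hε
  set v : (Fin n → ZMod 2) → EuclideanSpace ℂ (Fin dA × Fin dB) :=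
    fun s => toE ((A s ⊗ₖ (1 : Matrix (Fin dB) (Fin dB) ℂ)) *ᵥ ψ) with hv
  set w : Fin n → EuclideanSpace ℂ (Fin dA × Fin dB) :=
    fun t => toE (((1 : Matrix (Fin dA) (Fin dA) ℂ) ⊗ₖ B t) *ᵥ ψ) with hw
  set u : (Fin n → ZMod 2) → EuclideanSpace ℂ (Fin dA × Fin dB) :=
    fun s => ∑ t, (ε s t : ℂ) • w t with hu
  -- inner products
  have hvw : ∀ s t, (inner (𝕜 := ℂ) (v s) (w t) : ℂ) = star ψ ⬝ᵥ ((A s ⊗ₖ B t) *ᵥ ψ) := by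
    intro s t
    rw [hv, hw]
    dsimp only
    rw [quad, kronH, (hAherm s).eq, Matrix.conjTranspose_one, ← Matrix.mul_kronecker_mul,
      mul_one, one_mul]
  have hvv : ∀ s, (inner (𝕜 := ℂ) (v s) (v s) : ℂ) = 1 := by
    intro s
    rw [hv]; dsimp only
    rw [quad, kronH, (hAherm s).eq, Matrix.conjTranspose_one, ← Matrix.mul_kronecker_mul,
      hAsq s, one_mul, Matrix.one_kronecker_one, Matrix.one_mulVec, hψ]
  have hww : ∀ t t', (inner (𝕜 := ℂ) (w t) (w t') : ℂ)
      = star ψ ⬝ᵥ (((1 : Matrix (Fin dA) (Fin dA) ℂ) ⊗ₖ (B t * B t')) *ᵥ ψ) := by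
    intro t t'
    rw [hw]; dsimp only
    rw [quad, kronH, (hBherm t).eq, Matrix.conjTranspose_one, ← Matrix.mul_kronecker_mul,
      one_mul]
  have hwt : ∀ t, (inner (𝕜 := ℂ) (w t) (w t) : ℂ) = 1 := by
    intro t
    rw [hww, hBsq t, Matrix.one_kronecker_one, Matrix.one_mulVec, hψ]
  -- norms
  have hnv : ∀ s, ‖v s‖ = 1 := by
    intro s
    have h2 : ‖v s‖ ^ 2 = 1 := by
      rw [norm_sq_eq_re_inner (𝕜 := ℂ), hvv s]; simp
    nlinarith [norm_nonneg (v s)]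
  -- orthogonality of signs
  have hcard : (Fintype.card (Fin n → ZMod 2) : ℝ) = 2 ^ n := by
    simp [Fintype.card_fun]
  have horth : ∀ t t' : Fin n, (∑ s : Fin n → ZMod 2, ε s t * ε s t')
      = if t = t' then (2 ^ n : ℝ) else 0 := by
    intro t t'
    by_cases h : t = t'
    · subst h
      simp only [if_pos rfl]
      have : ∀ s : Fin n → ZMod 2, ε s t * ε s t = 1 := by
        intro s
        by_cases h0 : s t = 0 <;> simp [hε, h0]
      rw [Finset.sum_congr rfl fun s _ => this s]
      simp [Fintype.card_fun]
    · simp only [if_neg h]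
      set c : Fin n → ZMod 2 := fun i => if i = t then 1 else 0 with hc
      have key : ∀ s : Fin n → ZMod 2, ε (s + c) t * ε (s + c) t' = -(ε s t * ε s t') := by
        intro s
        have h1 : (s + c) t = s t + 1 := by simp [hc]
        have h2 : (s + c) t' = s t' := by simp [hc, Ne.symm h]
        have flip : ∀ x : ZMod 2, (if x + 1 = 0 then (1:ℝ) else -1)
            = -(if x = 0 then (1:ℝ) else -1) := by
          intro x; fin_cases x
          · show (if (0:ZMod 2) + 1 = 0 then (1:ℝ) else -1) = -(if (0:ZMod 2) = 0 then (1:ℝ) else -1)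
            norm_num [show (0:ZMod 2) + 1 ≠ 0 by decide]
          · show (if (1:ZMod 2) + 1 = 0 then (1:ℝ) else -1) = -(if (1:ZMod 2) = 0 then (1:ℝ) else -1)
            rw [if_pos (show (1:ZMod 2) + 1 = 0 by decide)]
            norm_num [show (1:ZMod 2) + 1 = 0 by decide, show (1:ZMod 2) ≠ 0 by decide]
        rw [hε]; dsimp only
        rw [h1, h2, flip]
        ring
      have heq : (∑ s : Fin n → ZMod 2, ε (s + c) t * ε (s + c) t')
          = ∑ s : Fin n → ZMod 2, ε s t * ε s t' :=
        Fintype.sum_equiv (Equiv.addRight c) _ _ (fun s => rfl)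
      have : (∑ s : Fin n → ZMod 2, ε s t * ε s t')
          = -∑ s : Fin n → ZMod 2, ε s t * ε s t' := by
        calc (∑ s : Fin n → ZMod 2, ε s t * ε s t')
            = ∑ s : Fin n → ZMod 2, ε (s + c) t * ε (s + c) t' := heq.symm
          _ = ∑ s : Fin n → ZMod 2, -(ε s t * ε s t') :=
              Finset.sum_congr rfl fun s _ => key s
          _ = -∑ s : Fin n → ZMod 2, ε s t * ε s t' := by rw [Finset.sum_neg_distrib]
      linarith
  -- expansion of ‖u s‖²
  have hus : ∀ s, ‖u s‖ ^ 2
      = ∑ t, ∑ t', ε s t * ε s t' * (inner (𝕜 := ℂ) (w t) (w t') : ℂ).re := by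
    intro s
    have hexp : (inner (𝕜 := ℂ) (u s) (u s) : ℂ)
        = ∑ t, ∑ t', ((ε s t * ε s t' : ℝ) : ℂ) * inner ℂ (w t) (w t') := by
      rw [hu]; dsimp only
      rw [sum_inner]
      refine Finset.sum_congr rfl fun t _ => ?_
      rw [inner_sum]
      refine Finset.sum_congr rfl fun t' _ => ?_
      rw [inner_smul_left, inner_smul_right, Complex.conj_ofReal, Complex.ofReal_mul]
      ring
    rw [norm_sq_eq_re_inner (𝕜 := ℂ), hexp]
    simp only [RCLike.re_to_complex, Complex.re_sum, Complex.re_ofReal_mul]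
  have hsum_u : (∑ s : Fin n → ZMod 2, ‖u s‖ ^ 2) = 2 ^ n * n := by
    have : (∑ s : Fin n → ZMod 2, ‖u s‖ ^ 2)
        = ∑ t : Fin n, ∑ t' : Fin n, (∑ s : Fin n → ZMod 2, ε s t * ε s t')
            * (inner (𝕜 := ℂ) (w t) (w t') : ℂ).re := by
      rw [Finset.sum_congr rfl fun s _ => hus s, Finset.sum_comm]
      refine Finset.sum_congr rfl fun t _ => ?_
      rw [Finset.sum_comm]
      refine Finset.sum_congr rfl fun t' _ => ?_
      rw [Finset.sum_mul]
    rw [this]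
    have : ∀ t : Fin n, (∑ t' : Fin n, (∑ s : Fin n → ZMod 2, ε s t * ε s t')
        * (inner (𝕜 := ℂ) (w t) (w t') : ℂ).re) = 2 ^ n := by
      intro t
      rw [Finset.sum_congr rfl fun t' _ => by rw [horth t t']]
      simp only [ite_mul, zero_mul]
      rw [Finset.sum_ite_eq Finset.univ t
        (fun t' => (2:ℝ)^n * (inner (𝕜 := ℂ) (w t) (w t') : ℂ).re)]
      rw [if_pos (Finset.mem_univ t), hwt t]; simp
    rw [Finset.sum_congr rfl fun t _ => this t]
    simp [Finset.sum_const, mul_comm]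
  -- main sum rewriting
  have hS1 : ∀ s, (∑ t, ε s t * (star ψ ⬝ᵥ ((A s ⊗ₖ B t) *ᵥ ψ)).re)
      = (inner (𝕜 := ℂ) (v s) (u s) : ℂ).re := by
    intro s
    have hexp : (inner (𝕜 := ℂ) (v s) (u s) : ℂ)
        = ∑ t, (ε s t : ℂ) * inner ℂ (v s) (w t) := by
      rw [hu]; dsimp only
      rw [inner_sum]
      exact Finset.sum_congr rfl fun t _ => by rw [inner_smul_right]
    rw [hexp, Complex.re_sum]
    exact Finset.sum_congr rfl fun t _ => by rw [hvw, Complex.re_ofReal_mul]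
  have hS2 : (∑ s : Fin n → ZMod 2, ∑ t, ε s t * (star ψ ⬝ᵥ ((A s ⊗ₖ B t) *ᵥ ψ)).re)
      ≤ ∑ s : Fin n → ZMod 2, ‖u s‖ := by
    refine Finset.sum_le_sum fun s _ => ?_
    rw [hS1 s]
    calc (inner (𝕜 := ℂ) (v s) (u s) : ℂ).re ≤ ‖v s‖ * ‖u s‖ := by
          simpa [RCLike.re_to_complex] using re_inner_le_norm (𝕜 := ℂ) (v s) (u s)
      _ = ‖u s‖ := by rw [hnv s, one_mul]
  have hS3 : (∑ s : Fin n → ZMod 2, ‖u s‖) ≤ 2 ^ n * Real.sqrt n := by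
    have hcs := sum_mul_sq_le_sq_mul_sq Finset.univ (fun _ => (1:ℝ)) (fun s => ‖u s‖)
    simp only [one_mul, one_pow] at hcs
    rw [Finset.sum_const, nsmul_eq_mul, hsum_u] at hcs
    have hnn : (0:ℝ) ≤ ∑ s : Fin n → ZMod 2, ‖u s‖ :=
      Finset.sum_nonneg fun s _ => norm_nonneg _
    have hcard2 : ((Finset.univ : Finset (Fin n → ZMod 2)).card : ℝ) = 2 ^ n := by
      simpa using hcard
    rw [hcard2] at hcs
    have hkey2 : (∑ s : Fin n → ZMod 2, ‖u s‖) ^ 2 ≤ (2 ^ n * Real.sqrt n) ^ 2 := by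
      have : (2 ^ n * Real.sqrt n : ℝ) ^ 2 = 2 ^ n * (2 ^ n * n) := by
        rw [mul_pow, Real.sq_sqrt hn0.le]; ring
      linarith
    have hpos : (0:ℝ) ≤ 2 ^ n * Real.sqrt n := by positivity
    exact le_of_pow_le_pow_left₀ two_ne_zero hpos hkey2
  -- conclusion
  have hS : (∑ s : Fin n → ZMod 2, ∑ t, ε s t * (star ψ ⬝ᵥ ((A s ⊗ₖ B t) *ᵥ ψ)).re)
      ≤ 2 ^ n * Real.sqrt n := hS2.trans hS3
  have hfinal : (1 / (n * 2 ^ n) : ℝ) * ∑ s : Fin n → ZMod 2, ∑ t : Fin n,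
      ε s t * (star ψ ⬝ᵥ ((A s ⊗ₖ B t) *ᵥ ψ)).re ≤ 1 / Real.sqrt n := by
    have hc0 : (0:ℝ) ≤ 1 / (n * 2 ^ n) := by positivity
    have h1 : (1 / (n * 2 ^ n) : ℝ) * ∑ s : Fin n → ZMod 2, ∑ t : Fin n,
        ε s t * (star ψ ⬝ᵥ ((A s ⊗ₖ B t) *ᵥ ψ)).re
        ≤ (1 / (n * 2 ^ n) : ℝ) * (2 ^ n * Real.sqrt n) :=
      mul_le_mul_of_nonneg_left hS hc0
    have h2 : (1 / (n * 2 ^ n) : ℝ) * (2 ^ n * Real.sqrt n) = 1 / Real.sqrt n := by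
      have hsq : Real.sqrt n * Real.sqrt n = (n:ℝ) := Real.mul_self_sqrt hn0.le
      have hsp : (0:ℝ) < Real.sqrt n := Real.sqrt_pos.mpr hn0
      field_simp
      linear_combination hsq
    linarith
  exact hfinal
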